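/- Let I be a countable set and, for each i ∈ I, let (f_m^i)_{m ∈ ℕ} be a family of real-valued functions on an interval (a,b) that is uniformly bounded (equibounded) and satisfies the semi-decreasing property: for all δ > 0 there exist τ > 0 and m_i ∈ ℕ such that whenever s_1, s_2 ∈ (a,b) with s_2 - τ ≤ s_1 ≤ s_2, then for all m ≥ m_i one has f_m^i(s_2) ≤ f_m^i(s_1) + δ. Then there exists a subsequence σ(m) and functions f^i : (a,b) → ℝ such that for every s ∈ (a,b) and every i ∈ I, f_{σ(m)}^i(s) → f^i(s). -/

import Mathlib

open Filter Topology

lemma bw {Y : Type*} [Countable Y] (u : ℕ → Y → ℝ)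
    (hb : ∀ y, ∃ B, ∀ m, |u m y| ≤ B) :
    ∃ φ : ℕ → ℕ, StrictMono φ ∧ ∀ y, ∃ L, Tendsto (fun m => u (φ m) y) atTop (𝓝 L) := by
  choose B hB using hb
  have hK : IsCompact (Set.univ.pi fun y : Y => Set.Icc (-(B y)) (B y)) :=
    isCompact_univ_pi fun y => isCompact_Icc
  have hmem : ∀ m, u m ∈ Set.univ.pi fun y : Y => Set.Icc (-(B y)) (B y) := by
    intro m y _
    exact abs_le.1 (hB y m)
  obtain ⟨G, -, φ, hφ, hconv⟩ := hK.tendsto_subseq hmem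
  exact ⟨φ, hφ, fun y => ⟨G y, tendsto_pi_nhds.1 hconv y⟩⟩

lemma helly_chain {a b τ δ : ℝ} (hτ : 0 < τ) (hδ : 0 < δ)
    (G : {q : ℚ // (q : ℝ) ∈ Set.Ioo a b} → ℝ)
    (hsd : ∀ q₁ q₂ : {q : ℚ // (q : ℝ) ∈ Set.Ioo a b},
      (q₂ : ℝ) - τ ≤ (q₁ : ℝ) → (q₁ : ℝ) ≤ (q₂ : ℝ) → G q₂ ≤ G q₁ + δ) :
    ∀ n : ℕ, ∀ q₁ q₂ : {q : ℚ // (q : ℝ) ∈ Set.Ioo a b},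
      (q₁ : ℝ) ≤ (q₂ : ℝ) → (q₂ : ℝ) - (q₁ : ℝ) < ((n : ℝ) + 1) * τ →
      G q₂ ≤ G q₁ + ((n : ℝ) + 1) * δ := by
  intro n
  induction n with
  | zero =>
    intro q₁ q₂ h hlt
    have := hsd q₁ q₂ (by push_cast at hlt; linarith) h
    push_cast
    linarith
  | succ n ih =>
    intro q₁ q₂ h hlt
    push_cast at hlt ⊢
    by_cases hc : (q₁ : ℝ) ≥ (q₂ : ℝ) - τ
    · have := hsd q₁ q₂ hc h
      have hn : (0 : ℝ) ≤ ((n : ℝ) + 1) * δ := by positivity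
      linarith
    · push_neg at hc
      have hnt : (0 : ℝ) < ((n : ℝ) + 1) * τ := by positivity
      have h1 : max ((q₂ : ℝ) - τ) (q₁ : ℝ) < min (q₂ : ℝ) ((q₁ : ℝ) + ((n : ℝ) + 1) * τ) := by
        refine max_lt (lt_min (by linarith) (by linarith)) (lt_min (by linarith) (by linarith))
      obtain ⟨r, hr1, hr2⟩ := exists_rat_btwn h1
      have hq₁r : (q₁ : ℝ) < r := lt_of_le_of_lt (le_max_right _ _) hr1
      have hrq₂ : (r : ℝ) < q₂ := lt_of_lt_of_le hr2 (min_le_left _ _)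
      have hrI : (r : ℝ) ∈ Set.Ioo a b := ⟨lt_trans q₁.2.1 hq₁r, lt_trans hrq₂ q₂.2.2⟩
      have e1 : G q₂ ≤ G ⟨r, hrI⟩ + δ := by
        refine hsd ⟨r, hrI⟩ q₂ ?_ hrq₂.le
        have := lt_of_le_of_lt (le_max_left _ _) hr1
        exact this.le
      have e2 : G ⟨r, hrI⟩ ≤ G q₁ + ((n : ℝ) + 1) * δ := by
        refine ih q₁ ⟨r, hrI⟩ hq₁r.le ?_
        have := lt_of_lt_of_le hr2 (min_le_right _ _)
        simp only []
        linarith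
      linarith

lemma helly_chain' {a b τ δ : ℝ} (hτ : 0 < τ) (hδ : 0 < δ)
    (G : {q : ℚ // (q : ℝ) ∈ Set.Ioo a b} → ℝ)
    (hsd : ∀ q₁ q₂ : {q : ℚ // (q : ℝ) ∈ Set.Ioo a b},
      (q₂ : ℝ) - τ ≤ (q₁ : ℝ) → (q₁ : ℝ) ≤ (q₂ : ℝ) → G q₂ ≤ G q₁ + δ) :
    ∀ q₁ q₂ : {q : ℚ // (q : ℝ) ∈ Set.Ioo a b}, (q₁ : ℝ) ≤ (q₂ : ℝ) →
      G q₂ - δ / τ * (q₂ : ℝ) ≤ G q₁ - δ / τ * (q₁ : ℝ) + δ := by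
  intro q₁ q₂ h
  set n := ⌊((q₂ : ℝ) - (q₁ : ℝ)) / τ⌋₊ with hn
  have hfl : ((q₂ : ℝ) - (q₁ : ℝ)) / τ < n + 1 := Nat.lt_floor_add_one _
  have hfl2 : (n : ℝ) ≤ ((q₂ : ℝ) - (q₁ : ℝ)) / τ :=
    Nat.floor_le (div_nonneg (by linarith) hτ.le)
  have hmain := helly_chain hτ hδ G hsd n q₁ q₂ h (by rw [div_lt_iff₀ hτ] at hfl; linarith)
  have h2 : ((n : ℝ) + 1) * δ ≤ (((q₂ : ℝ) - (q₁ : ℝ)) / τ + 1) * δ :=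
    mul_le_mul_of_nonneg_right (by linarith) hδ.le
  have h3 : (((q₂ : ℝ) - (q₁ : ℝ)) / τ + 1) * δ = δ / τ * ((q₂ : ℝ) - (q₁ : ℝ)) + δ := by
    field_simp
  linarith

theorem stmt4 {I : Type*} [Countable I] (a b : ℝ)
    (f : I → ℕ → ℝ → ℝ)
    (hbd : ∀ i, ∃ B, ∀ m, ∀ s ∈ Set.Ioo a b, |f i m s| ≤ B)
    (hsd : ∀ i, ∀ δ > (0 : ℝ), ∃ τ > (0 : ℝ), ∃ mi : ℕ,
      ∀ s₁ ∈ Set.Ioo a b, ∀ s₂ ∈ Set.Ioo a b,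
        s₂ - τ ≤ s₁ → s₁ ≤ s₂ → ∀ m ≥ mi, f i m s₂ ≤ f i m s₁ + δ) :
    ∃ σ : ℕ → ℕ, StrictMono σ ∧ ∃ g : I → ℝ → ℝ,
      ∀ s ∈ Set.Ioo a b, ∀ i,
        Filter.Tendsto (fun m => f i (σ m) s) Filter.atTop (nhds (g i s)) := by
  classical
  choose B hB using hbd
  obtain ⟨σ₁, hσ₁, hlim1⟩ := bw (Y := I × {q : ℚ // (q : ℝ) ∈ Set.Ioo a b})
    (fun m x => f x.1 m x.2)
    (fun x => ⟨B x.1, fun m => hB x.1 m _ x.2.2⟩)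
  choose L hL using hlim1
  have hLbd : ∀ x, |L x| ≤ B x.1 := fun x =>
    le_of_tendsto (hL x).abs (Filter.Eventually.of_forall fun m => hB x.1 (σ₁ m) _ x.2.2)
  have hsd' : ∀ (i : I) (k : ℕ), ∃ τ > (0 : ℝ), ∃ mi : ℕ,
      ∀ s₁ ∈ Set.Ioo a b, ∀ s₂ ∈ Set.Ioo a b, s₂ - τ ≤ s₁ → s₁ ≤ s₂ →
        ∀ m ≥ mi, f i m s₂ ≤ f i m s₁ + 1 / ((k : ℝ) + 1) :=
    fun i k => hsd i (1 / ((k : ℝ) + 1)) (by positivity)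
  choose τ hτpos mi hf using hsd'
  have hdlt : ∀ k : ℕ, (0 : ℝ) < 1 / ((k : ℝ) + 1) := fun k => by positivity
  have hLsd : ∀ (i : I) (k : ℕ), ∀ q₁ q₂ : {q : ℚ // (q : ℝ) ∈ Set.Ioo a b},
      (q₂ : ℝ) - τ i k ≤ (q₁ : ℝ) → (q₁ : ℝ) ≤ (q₂ : ℝ) →
      L (i, q₂) ≤ L (i, q₁) + 1 / ((k : ℝ) + 1) := by
    intro i k q₁ q₂ h1 h2
    refine le_of_tendsto_of_tendsto (hL (i, q₂)) ((hL (i, q₁)).add_const _) ?_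
    filter_upwards [Filter.eventually_ge_atTop (mi i k)] with m hm
    exact hf i k _ q₁.2 _ q₂.2 h1 h2 (σ₁ m) (le_trans hm hσ₁.le_apply)
  set c : I → ℕ → ℝ := fun i k => (1 / ((k : ℝ) + 1)) / τ i k with hcdef
  have hcpos : ∀ i k, 0 < c i k := fun i k => div_pos (hdlt k) (hτpos i k)
  set E : I → ℕ → ℝ → Set ℝ := fun i k x =>
    insert (-(B i) - c i k * (|a| + |b|))
      ((fun q : {q : ℚ // (q : ℝ) ∈ Set.Ioo a b} => L (i, q) - c i k * (q : ℝ)) ''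
        {q | x ≤ (q : ℝ)}) with hEdef
  have hEbdd : ∀ i k x, BddAbove (E i k x) := by
    intro i k x
    refine ⟨max (-(B i) - c i k * (|a| + |b|)) (B i + c i k * (|a| + |b|)), ?_⟩
    rintro v (rfl | ⟨q, hq, rfl⟩)
    · exact le_max_left _ _
    · refine le_trans ?_ (le_max_right _ _)
      have h1 := (abs_le.1 (hLbd (i, q))).2
      have h2 : -(|a| + |b|) ≤ (q : ℝ) := by
        have ha := q.2.1; have := neg_abs_le a; have := abs_nonneg b; linarith
      have h3 : c i k * (-(q : ℝ)) ≤ c i k * (|a| + |b|) :=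
        mul_le_mul_of_nonneg_left (by linarith) (hcpos i k).le
      rw [mul_neg] at h3
      show L (i, q) - c i k * (q : ℝ) ≤ B i + c i k * (|a| + |b|)
      linarith
  set W : I → ℕ → ℝ → ℝ := fun i k x => sSup (E i k x) with hWdef
  have hWanti : ∀ i k, Antitone (W i k) := by
    intro i k x y hxy
    refine csSup_le_csSup (hEbdd i k x) ⟨_, Set.mem_insert _ _⟩ ?_
    exact Set.insert_subset_insert (Set.image_mono fun q hq => le_trans hxy hq)
  have hW1 : ∀ (i : I) (k : ℕ) (q : {q : ℚ // (q : ℝ) ∈ Set.Ioo a b}),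
      L (i, q) - c i k * (q : ℝ) ≤ W i k (q : ℝ) :=
    fun i k q => le_csSup (hEbdd i k q) (Set.mem_insert_of_mem _ ⟨q, show (q:ℝ) ≤ (q:ℝ) from le_refl _, rfl⟩)
  have hW2 : ∀ (i : I) (k : ℕ) (q : {q : ℚ // (q : ℝ) ∈ Set.Ioo a b}),
      W i k (q : ℝ) ≤ L (i, q) - c i k * (q : ℝ) + 1 / ((k : ℝ) + 1) := by
    intro i k q
    refine csSup_le ⟨_, Set.mem_insert _ _⟩ ?_
    rintro v (rfl | ⟨t, ht, rfl⟩)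
    · have h1 := (abs_le.1 (hLbd (i, q))).1
      have h2 : (q : ℝ) ≤ |a| + |b| := by
        have hb' := q.2.2; have := le_abs_self b; have := abs_nonneg a; linarith
      have h3 : c i k * (q : ℝ) ≤ c i k * (|a| + |b|) :=
        mul_le_mul_of_nonneg_left h2 (hcpos i k).le
      have h4 := (hdlt k).le
      linarith
    · have := helly_chain' (hτpos i k) (hdlt k) (fun q => L (i, q)) (hLsd i k) q t ht
      simp only [hcdef]
      linarith
  set J : I → Set ℝ := fun i => ⋃ k : ℕ, {x | ¬ContinuousAt (W i k) x} with hJdef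
  have hJc : ∀ i, (J i).Countable :=
    fun i => Set.countable_iUnion fun k => (hWanti i k).countable_not_continuousAt
  haveI : ∀ i : I, Countable ↥(J i ∩ Set.Ioo a b) :=
    fun i => ((hJc i).mono Set.inter_subset_left).to_subtype
  obtain ⟨σ₂, hσ₂, hlim2⟩ := bw (Y := Σ i : I, ↥(J i ∩ Set.Ioo a b))
    (fun m y => f y.1 (σ₁ m) y.2)
    (fun y => ⟨B y.1, fun m => hB y.1 _ _ y.2.2.2⟩)
  have key : ∀ (i : I) (s : ℝ), s ∈ Set.Ioo a b →
      ∃ A, Filter.Tendsto (fun m => f i (σ₁ (σ₂ m)) s) Filter.atTop (𝓝 A) := by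
    intro i s hs
    by_cases hsJ : s ∈ J i
    · exact hlim2 ⟨i, ⟨s, hsJ, hs⟩⟩
    · have hcont : ∀ k, ContinuousAt (W i k) s := by
        intro k
        by_contra hk
        exact hsJ (Set.mem_iUnion.2 ⟨k, hk⟩)
      have hcauchy : CauchySeq (fun m => f i (σ₁ m) s) := by
        rw [Metric.cauchySeq_iff']
        intro ε hε
        obtain ⟨k, hk⟩ := exists_nat_one_div_lt (show (0 : ℝ) < ε / 10 by linarith)
        have hδpos := hdlt k
        obtain ⟨θ', hθ'pos, hθ'⟩ := Metric.continuousAt_iff.1 (hcont k) _ hδpos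
        set θ := min (θ' / 2) (τ i k) with hθdef
        have hθpos : 0 < θ := lt_min (by linarith) (hτpos i k)
        have hθτ : θ ≤ τ i k := min_le_right _ _
        have hθθ' : θ < θ' := lt_of_le_of_lt (min_le_left _ _) (by linarith)
        obtain ⟨q₁, hq₁l, hq₁r⟩ :=
          exists_rat_btwn (show max a (s - θ) < s from max_lt hs.1 (by linarith))
        obtain ⟨q₂, hq₂l, hq₂r⟩ :=
          exists_rat_btwn (show s < min b (s + θ) from lt_min hs.2 (by linarith))
        have hq₁I : (q₁ : ℝ) ∈ Set.Ioo a b :=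
          ⟨lt_of_le_of_lt (le_max_left _ _) hq₁l, lt_trans hq₁r hs.2⟩
        have hq₂I : (q₂ : ℝ) ∈ Set.Ioo a b :=
          ⟨lt_trans hs.1 hq₂l, lt_of_lt_of_le hq₂r (min_le_left _ _)⟩
        have hq₁θ : s - θ < q₁ := lt_of_le_of_lt (le_max_right _ _) hq₁l
        have hq₂θ : (q₂ : ℝ) < s + θ := lt_of_lt_of_le hq₂r (min_le_right _ _)
        have hWq₁ : |W i k (q₁ : ℝ) - W i k s| < 1 / ((k : ℝ) + 1) := by
          have hd : dist (q₁ : ℝ) s < θ' := by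
            rw [Real.dist_eq, abs_lt]; constructor <;> linarith
          have := hθ' hd
          rwa [Real.dist_eq] at this
        have hWq₂ : |W i k (q₂ : ℝ) - W i k s| < 1 / ((k : ℝ) + 1) := by
          have hd : dist (q₂ : ℝ) s < θ' := by
            rw [Real.dist_eq, abs_lt]; constructor <;> linarith
          have := hθ' hd
          rwa [Real.dist_eq] at this
        obtain ⟨N₁, hN₁⟩ := Metric.tendsto_atTop.1 (hL (i, ⟨q₁, hq₁I⟩)) _ hδpos
        obtain ⟨N₂, hN₂⟩ := Metric.tendsto_atTop.1 (hL (i, ⟨q₂, hq₂I⟩)) _ hδpos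
        refine ⟨max (max N₁ N₂) (mi i k), fun n hn => ?_⟩
        have hbound : ∀ m, max (max N₁ N₂) (mi i k) ≤ m →
            |f i (σ₁ m) s - (W i k s + c i k * s)| ≤ 4 * (1 / ((k : ℝ) + 1)) := by
          intro m hm
          have hmmi : mi i k ≤ σ₁ m :=
            le_trans (le_trans (le_max_right _ _) hm) hσ₁.le_apply
          have e1 : f i (σ₁ m) s ≤ f i (σ₁ m) q₁ + 1 / ((k : ℝ) + 1) :=
            hf i k q₁ hq₁I s hs (by linarith) hq₁r.le (σ₁ m) hmmi
          have e2 : f i (σ₁ m) q₂ ≤ f i (σ₁ m) s + 1 / ((k : ℝ) + 1) :=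
            hf i k s hs q₂ hq₂I (by linarith) hq₂l.le (σ₁ m) hmmi
          have e3 : |f i (σ₁ m) q₁ - L (i, ⟨q₁, hq₁I⟩)| < 1 / ((k : ℝ) + 1) := by
            have := hN₁ m (le_trans (le_trans (le_max_left _ _) (le_max_left _ _)) hm)
            rwa [Real.dist_eq] at this
          have e4 : |f i (σ₁ m) q₂ - L (i, ⟨q₂, hq₂I⟩)| < 1 / ((k : ℝ) + 1) := by
            have := hN₂ m (le_trans (le_trans (le_max_right _ _) (le_max_left _ _)) hm)
            rwa [Real.dist_eq] at this
          have e5 : L (i, ⟨q₁, hq₁I⟩) - c i k * (q₁ : ℝ) ≤ W i k (q₁ : ℝ) :=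
            hW1 i k ⟨q₁, hq₁I⟩
          have e6 : W i k (q₂ : ℝ) ≤ L (i, ⟨q₂, hq₂I⟩) - c i k * (q₂ : ℝ) + 1 / ((k : ℝ) + 1) :=
            hW2 i k ⟨q₂, hq₂I⟩
          have e9 : c i k * (q₁ : ℝ) ≤ c i k * s :=
            mul_le_mul_of_nonneg_left hq₁r.le (hcpos i k).le
          have e10 : c i k * s ≤ c i k * (q₂ : ℝ) :=
            mul_le_mul_of_nonneg_left hq₂l.le (hcpos i k).le
          have e3' := abs_lt.1 e3
          have e4' := abs_lt.1 e4
          have e7' := abs_lt.1 hWq₁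
          have e8' := abs_lt.1 hWq₂
          rw [abs_le]
          constructor
          · linarith [e3'.1, e3'.2, e7'.1, e7'.2]
          · linarith [e4'.1, e4'.2, e8'.1, e8'.2]
        have h1 := hbound n hn
        have h2 := hbound (max (max N₁ N₂) (mi i k)) (le_refl _)
        rw [Real.dist_eq]
        have h1' := abs_le.1 h1
        have h2' := abs_le.1 h2
        rw [abs_lt]
        constructor <;> linarith
      obtain ⟨A, hA⟩ := cauchySeq_tendsto_of_complete hcauchy
      exact ⟨A, hA.comp hσ₂.tendsto_atTop⟩
  have key' : ∀ (i : I) (s : ℝ), ∃ A, s ∈ Set.Ioo a b →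
      Filter.Tendsto (fun m => f i (σ₁ (σ₂ m)) s) Filter.atTop (𝓝 A) := by
    intro i s
    by_cases h : s ∈ Set.Ioo a b
    · exact (key i s h).imp fun A hA _ => hA
    · exact ⟨0, fun h' => absurd h' h⟩
  choose g hg using key'
  exact ⟨σ₁ ∘ σ₂, hσ₁.comp hσ₂, g, fun s hs i => hg i s hs⟩
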